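/- The tangent cone of C₆ = {F₆ = 0} at p₁ = [-2:1:1] is a double line, and that line is the line T₁ through p₀ = [0:0:1] and p₁ (i.e. the tacnodal tangent at p₁ is T₁: x + 2y = 0). -/
import Mathlib


open MvPolynomial

/-- F₆ in the affine chart z = 1. -/
noncomputable def f₆ : MvPolynomial (Fin 2) ℚ :=
  let x : MvPolynomial (Fin 2) ℚ := X 0
  let y : MvPolynomial (Fin 2) ℚ := X 1
  4*x^6 - 273*x^4*y^2 - 258*x^2*y^4 - 481*y^6 + 720*x^4*y + 1740*x^2*y^3 +
  4020*y^5 - 520*x^4 - 3190*x^2*y^2 - 12670*y^4 + 1200*x^2*y +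
  17700*y^3 + 900*x^2 - 9225*y^2

/-- Recentering at the point (a,b). -/
noncomputable def shiftAt (a b : ℚ) (f : MvPolynomial (Fin 2) ℚ) : MvPolynomial (Fin 2) ℚ :=
  aeval ![X 0 + C a, X 1 + C b] f

private lemma hmon (c : ℚ) (a b n : ℕ) (h : a + b = n) :
    ((C c * X 0 ^ a * X 1 ^ b : MvPolynomial (Fin 2) ℚ)).IsHomogeneous n := by
  subst h
  simpa [mul_assoc] using
    (((isHomogeneous_X_pow (R := ℚ) 0 a).mul (isHomogeneous_X_pow (R := ℚ) 1 b)).C_mul c)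

set_option maxHeartbeats 2000000 in
/-- The tangent cone of C₆ at p₁ = [-2:1:1] is a double line, namely the line
T₁ : x + 2y = 0 through p₀ and p₁ (in coordinates centered at p₁ it is x + 2y). -/
theorem stmt18 :
    ∃ c : ℚ, c ≠ 0 ∧
      homogeneousComponent 2 (shiftAt (-2) 1 f₆) = C c * (X 0 + 2 * X 1) ^ 2 := by
  refine ⟨-400, by norm_num, ?_⟩
  have key : shiftAt (-2) 1 f₆ =
      C (-400) * ((X 0) + 2 * (X 1)) ^ 2 +
      ((C (-56) * (X 0) ^ 3 * (X 1) ^ 0 + C 3184 * (X 0) ^ 2 * (X 1) ^ 1 + C 6808 * (X 0) ^ 1 * (X 1) ^ 2 +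
          C 432 * (X 0) ^ 0 * (X 1) ^ 3) +
       (C 167 * (X 0) ^ 4 * (X 1) ^ 0 + C (-1392) * (X 0) ^ 3 * (X 1) ^ 1 + C (-6070) * (X 0) ^ 2 * (X 1) ^ 2 +
          C (-2832) * (X 0) ^ 1 * (X 1) ^ 3 + C (-817) * (X 0) ^ 0 * (X 1) ^ 4) +
       (C (-48) * (X 0) ^ 5 * (X 1) ^ 0 + C 174 * (X 0) ^ 4 * (X 1) ^ 1 + C 2184 * (X 0) ^ 3 * (X 1) ^ 2 +
          C 708 * (X 0) ^ 2 * (X 1) ^ 3 + C 1032 * (X 0) ^ 1 * (X 1) ^ 4 + C 1134 * (X 0) ^ 0 * (X 1) ^ 5) +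
       (C 4 * (X 0) ^ 6 * (X 1) ^ 0 + C (-273) * (X 0) ^ 4 * (X 1) ^ 2 + C (-258) * (X 0) ^ 2 * (X 1) ^ 4 +
          C (-481) * (X 0) ^ 0 * (X 1) ^ 6)) := by
    simp only [shiftAt, f₆, map_add, map_sub, map_mul, map_pow, map_ofNat, aeval_X, aeval_C,
      Matrix.cons_val_zero, Matrix.cons_val_one, Matrix.head_cons]
    simp only [map_neg, map_one, map_ofNat]
    ring
  have h2 : ((C (-400) * ((X 0) + 2 * (X 1)) ^ 2 : MvPolynomial (Fin 2) ℚ)).IsHomogeneous 2 := by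
    have h2y : ((2 * (X 1) : MvPolynomial (Fin 2) ℚ)).IsHomogeneous 1 := by
      have : (2 * (X 1) : MvPolynomial (Fin 2) ℚ) = C 2 * (X 1) := by
        rw [map_ofNat]
      rw [this]
      exact (isHomogeneous_X _ _).C_mul _
    simpa using (((isHomogeneous_X (R := ℚ) 0).add h2y).pow 2).C_mul (-400)
  have h3 : ((C (-56) * (X 0) ^ 3 * (X 1) ^ 0 + C 3184 * (X 0) ^ 2 * (X 1) ^ 1 + C 6808 * (X 0) ^ 1 * (X 1) ^ 2 +
      C 432 * (X 0) ^ 0 * (X 1) ^ 3 : MvPolynomial (Fin 2) ℚ)).IsHomogeneous 3 :=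
    (((hmon (-56) 3 0 3 rfl).add (hmon 3184 2 1 3 rfl)).add (hmon 6808 1 2 3 rfl)).add
      (hmon 432 0 3 3 rfl)
  have h4 : ((C 167 * (X 0) ^ 4 * (X 1) ^ 0 + C (-1392) * (X 0) ^ 3 * (X 1) ^ 1 + C (-6070) * (X 0) ^ 2 * (X 1) ^ 2 +
      C (-2832) * (X 0) ^ 1 * (X 1) ^ 3 + C (-817) * (X 0) ^ 0 * (X 1) ^ 4 :
      MvPolynomial (Fin 2) ℚ)).IsHomogeneous 4 :=
    ((((hmon 167 4 0 4 rfl).add (hmon (-1392) 3 1 4 rfl)).add (hmon (-6070) 2 2 4 rfl)).add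
      (hmon (-2832) 1 3 4 rfl)).add (hmon (-817) 0 4 4 rfl)
  have h5 : ((C (-48) * (X 0) ^ 5 * (X 1) ^ 0 + C 174 * (X 0) ^ 4 * (X 1) ^ 1 + C 2184 * (X 0) ^ 3 * (X 1) ^ 2 +
      C 708 * (X 0) ^ 2 * (X 1) ^ 3 + C 1032 * (X 0) ^ 1 * (X 1) ^ 4 + C 1134 * (X 0) ^ 0 * (X 1) ^ 5 :
      MvPolynomial (Fin 2) ℚ)).IsHomogeneous 5 :=
    (((((hmon (-48) 5 0 5 rfl).add (hmon 174 4 1 5 rfl)).add (hmon 2184 3 2 5 rfl)).add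
      (hmon 708 2 3 5 rfl)).add (hmon 1032 1 4 5 rfl)).add (hmon 1134 0 5 5 rfl)
  have h6 : ((C 4 * (X 0) ^ 6 * (X 1) ^ 0 + C (-273) * (X 0) ^ 4 * (X 1) ^ 2 + C (-258) * (X 0) ^ 2 * (X 1) ^ 4 +
      C (-481) * (X 0) ^ 0 * (X 1) ^ 6 : MvPolynomial (Fin 2) ℚ)).IsHomogeneous 6 :=
    (((hmon 4 6 0 6 rfl).add (hmon (-273) 4 2 6 rfl)).add (hmon (-258) 2 4 6 rfl)).add
      (hmon (-481) 0 6 6 rfl)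
  rw [key, map_add, map_add, map_add, map_add,
    homogeneousComponent_of_mem h2, homogeneousComponent_of_mem h3,
    homogeneousComponent_of_mem h4, homogeneousComponent_of_mem h5,
    homogeneousComponent_of_mem h6]
  norm_num
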